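/- For all natural numbers l, m and all t ≥ 1: if d divides l·t and d divides m·t then |tr((X^l Z^m)^t)| = d, and otherwise tr((X^l Z^m)^t) = 0. -/

import Mathlib

/-- `ζ = exp(2πi/d)`, a primitive `d`-th root of unity. -/
noncomputable def zeta (d : ℕ) : ℂ := Complex.exp (2 * Real.pi * Complex.I / d)

/-- The qudit shift matrix `X`: `X j k = 1` if `j = k + 1`, else `0`. -/
def pauliX (d : ℕ) : Matrix (ZMod d) (ZMod d) ℂ :=
  Matrix.of fun j k => if j = k + 1 then 1 else 0

/-- The qudit clock matrix `Z`: diagonal with `Z j j = ζ^j`. -/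
noncomputable def pauliZ (d : ℕ) : Matrix (ZMod d) (ZMod d) ℂ :=
  Matrix.of fun j k => if j = k then zeta d ^ j.val else 0

open Finset

section Aux

variable (d : ℕ) [NeZero d]

lemma zeta_isPrimitiveRoot : IsPrimitiveRoot (zeta d) d :=
  Complex.isPrimitiveRoot_exp d (NeZero.ne d)

lemma zeta_pow_d : zeta d ^ d = 1 := (zeta_isPrimitiveRoot d).pow_eq_one

lemma abs_zeta : ‖zeta d‖ = 1 := by
  have h : zeta d = Complex.exp (((2 * Real.pi / d : ℝ) : ℂ) * Complex.I) := by
    unfold zeta; push_cast; ring_nf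
  rw [h, Complex.norm_exp_ofReal_mul_I]

/-- `ε x = ζ^x` for `x : ZMod d`. -/
noncomputable def eps (x : ZMod d) : ℂ := zeta d ^ x.val

lemma eps_zero : eps d 0 = 1 := by simp [eps]

lemma zeta_pow_mod (a : ℕ) : zeta d ^ (a % d) = zeta d ^ a := by
  conv_rhs => rw [← Nat.mod_add_div a d]
  rw [pow_add, pow_mul, zeta_pow_d, one_pow, mul_one]

lemma eps_add (x y : ZMod d) : eps d (x + y) = eps d x * eps d y := by
  unfold eps
  rw [← pow_add, ZMod.val_add, zeta_pow_mod]

lemma eps_sum {ι : Type*} (s : Finset ι) (g : ι → ZMod d) :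
    eps d (∑ i ∈ s, g i) = ∏ i ∈ s, eps d (g i) := by
  classical
  induction s using Finset.cons_induction with
  | empty => simp [eps_zero]
  | cons a s ha ih => rw [Finset.sum_cons, Finset.prod_cons, eps_add, ih]

lemma eps_nsmul (t : ℕ) (x : ZMod d) : eps d (t • x) = eps d x ^ t := by
  induction t with
  | zero => simp [eps_zero]
  | succ n ih => rw [succ_nsmul, eps_add, ih, pow_succ]

/-- The "shifted diagonal" matrix with `f k` at position `(k+a, k)`. -/
noncomputable def shiftM (a : ZMod d) (f : ZMod d → ℂ) : Matrix (ZMod d) (ZMod d) ℂ :=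
  Matrix.of fun j k => if j = k + a then f k else 0

lemma shiftM_mul (a b : ZMod d) (f g : ZMod d → ℂ) :
    shiftM d a f * shiftM d b g = shiftM d (a + b) (fun k => f (k + b) * g k) := by
  ext j k
  simp only [shiftM, Matrix.mul_apply, Matrix.of_apply]
  rw [Finset.sum_eq_single (k + b)]
  · have h1 : k + b + a = k + (a + b) := by ring
    by_cases h : j = k + (a + b)
    · simp [h, h1]
    · simp only [h1, if_neg h, if_pos rfl, zero_mul]
  · intro i _ hi
    rw [if_neg hi, mul_zero]
  · intro h; exact absurd (Finset.mem_univ _) h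

lemma shiftM_one : shiftM d 0 (fun _ => (1 : ℂ)) = 1 := by
  ext j k
  simp [shiftM, Matrix.one_apply]

lemma shiftM_pow (a : ZMod d) (f : ZMod d → ℂ) (t : ℕ) :
    shiftM d a f ^ t = shiftM d (t • a) (fun k => ∏ i ∈ Finset.range t, f (k + i • a)) := by
  induction t with
  | zero => simp [shiftM_one]
  | succ n ih =>
    rw [pow_succ, ih, shiftM_mul, succ_nsmul]
    have hf : (fun k => (∏ i ∈ Finset.range n, f (k + a + i • a)) * f k) =
        fun k => ∏ i ∈ Finset.range (n + 1), f (k + i • a) := by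
      funext k
      rw [Finset.prod_range_succ']
      simp only [zero_smul, add_zero]
      congr 1
      refine Finset.prod_congr rfl fun i _ => ?_
      congr 1
      rw [succ_nsmul]
      abel
    rw [hf]

lemma shiftM_trace (a : ZMod d) (f : ZMod d → ℂ) :
    (shiftM d a f).trace = if a = 0 then ∑ k : ZMod d, f k else 0 := by
  unfold Matrix.trace shiftM
  by_cases h : a = 0 <;> simp [h, Matrix.diag, left_eq_add]

lemma pauliX_pow (l : ℕ) : pauliX d ^ l = shiftM d (l : ZMod d) (fun _ => 1) := by
  induction l with
  | zero => simp [shiftM_one]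
  | succ n ih =>
    have hX : pauliX d = shiftM d 1 (fun _ => 1) := rfl
    have hc : ((n : ZMod d) + 1) = ((n + 1 : ℕ) : ZMod d) := by push_cast; ring
    have hf : (fun k : ZMod d => (1 : ℂ) * 1) = fun _ : ZMod d => (1 : ℂ) := by
      funext k; rw [one_mul]
    rw [pow_succ, ih, hX, shiftM_mul, hc, hf]

lemma pauliZ_eq : pauliZ d = shiftM d 0 (fun k => eps d k) := by
  ext j k
  simp only [pauliZ, shiftM, eps, Matrix.of_apply, add_zero]
  by_cases h : j = k <;> simp [h]

lemma pauliZ_pow (m : ℕ) : pauliZ d ^ m = shiftM d 0 (fun k => eps d k ^ m) := by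
  induction m with
  | zero => simp [shiftM_one]
  | succ n ih =>
    rw [pow_succ, ih, pauliZ_eq, shiftM_mul]
    simp only [add_zero]
    have hf : (fun k : ZMod d => eps d k ^ n * eps d k) = fun k => eps d k ^ (n + 1) := by
      funext k
      rw [pow_succ]
    rw [hf]

lemma pauliXZ (l m : ℕ) :
    pauliX d ^ l * pauliZ d ^ m = shiftM d (l : ZMod d) (fun k => eps d k ^ m) := by
  rw [pauliX_pow, pauliZ_pow, shiftM_mul]
  simp only [add_zero, one_mul]

lemma sum_eps_pow (N : ℕ) :
    ∑ k : ZMod d, eps d k ^ N = if d ∣ N then (d : ℂ) else 0 := by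
  have hζ := zeta_isPrimitiveRoot d
  have hval : ∑ k : ZMod d, eps d k ^ N = ∑ i ∈ Finset.range d, (zeta d ^ N) ^ i := by
    refine Finset.sum_nbij' (fun k : ZMod d => k.val) (fun i : ℕ => (i : ZMod d))
      ?_ ?_ ?_ ?_ ?_
    · intro k _
      exact Finset.mem_range.mpr (ZMod.val_lt k)
    · intro i _
      exact Finset.mem_univ _
    · intro k _
      exact ZMod.natCast_zmod_val k
    · intro i hi
      exact ZMod.val_cast_of_lt (Finset.mem_range.mp hi)
    · intro k _
      rw [eps, ← pow_mul, ← pow_mul, Nat.mul_comm]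
  rw [hval]
  by_cases hdvd : d ∣ N
  · rw [if_pos hdvd]
    have h1 : zeta d ^ N = 1 := (hζ.pow_eq_one_iff_dvd N).mpr hdvd
    simp [h1]
  · rw [if_neg hdvd]
    have h1 : zeta d ^ N ≠ 1 := fun h => hdvd ((hζ.pow_eq_one_iff_dvd N).mp h)
    rw [geom_sum_eq h1]
    have : (zeta d ^ N) ^ d = 1 := by
      rw [← pow_mul, Nat.mul_comm, pow_mul, zeta_pow_d, one_pow]
    rw [this, sub_self, zero_div]

lemma abs_eps (x : ZMod d) : ‖eps d x‖ = 1 := by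
  rw [eps, norm_pow, abs_zeta, one_pow]

end Aux

/-- For all `l, m` and `t ≥ 1`: if `d ∣ l·t` and `d ∣ m·t` then
`|tr((X^l Z^m)^t)| = d`, and otherwise `tr((X^l Z^m)^t) = 0`. -/
theorem trace_pauli_pow (d : ℕ) [NeZero d] (hd : 2 ≤ d) (l m t : ℕ) (ht : 1 ≤ t) :
    (d ∣ l * t ∧ d ∣ m * t →
        ‖((pauliX d ^ l * pauliZ d ^ m) ^ t).trace‖ = d) ∧
    (¬(d ∣ l * t ∧ d ∣ m * t) →
        ((pauliX d ^ l * pauliZ d ^ m) ^ t).trace = 0) := by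
  have hsmul : t • ((l : ZMod d)) = ((l * t : ℕ) : ZMod d) := by
    push_cast
    rw [nsmul_eq_mul]
    ring
  have hkey : ((pauliX d ^ l * pauliZ d ^ m) ^ t).trace =
      if ((l * t : ℕ) : ZMod d) = 0 then
        eps d (∑ i ∈ Finset.range t, i • (l : ZMod d)) ^ m *
          (if d ∣ m * t then (d : ℂ) else 0)
      else 0 := by
    rw [pauliXZ, shiftM_pow, shiftM_trace, hsmul]
    by_cases h0 : ((l * t : ℕ) : ZMod d) = 0
    · rw [if_pos h0, if_pos h0]
      have hterm : ∀ k : ZMod d,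
          ∏ i ∈ Finset.range t, eps d (k + i • (l : ZMod d)) ^ m =
            eps d (∑ i ∈ Finset.range t, i • (l : ZMod d)) ^ m * eps d k ^ (m * t) := by
        intro k
        rw [Finset.prod_pow, ← eps_sum, Finset.sum_add_distrib, Finset.sum_const,
          Finset.card_range, eps_add, eps_nsmul, mul_pow, ← pow_mul]
        ring
      calc ∑ k : ZMod d, ∏ i ∈ Finset.range t, eps d (k + i • (l : ZMod d)) ^ m
          = ∑ k : ZMod d,
              eps d (∑ i ∈ Finset.range t, i • (l : ZMod d)) ^ m * eps d k ^ (m * t) :=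
            Finset.sum_congr rfl fun k _ => hterm k
        _ = eps d (∑ i ∈ Finset.range t, i • (l : ZMod d)) ^ m *
              ∑ k : ZMod d, eps d k ^ (m * t) := by rw [← Finset.mul_sum]
        _ = _ := by rw [sum_eps_pow]
    · rw [if_neg h0, if_neg h0]
  constructor
  · rintro ⟨h1, h2⟩
    rw [hkey, if_pos ((ZMod.natCast_eq_zero_iff _ _).mpr h1), if_pos h2,
      norm_mul, norm_pow, abs_eps, one_pow, one_mul, Complex.norm_natCast]
  · intro hne
    rw [hkey]
    by_cases h1 : d ∣ l * t
    · have h2 : ¬ d ∣ m * t := fun h2 => hne ⟨h1, h2⟩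
      rw [if_pos ((ZMod.natCast_eq_zero_iff _ _).mpr h1), if_neg h2, mul_zero]
    · rw [if_neg (fun h => h1 ((ZMod.natCast_eq_zero_iff _ _).mp h))]
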